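/- A numeral system d possesses a closed λ-term for Zero Test if and only if the total function φ : ℕ → ℕ defined by φ(0) = 0 and φ(n) = 1 for every n ≥ 1 is λ-definable with respect to d. -/

import Mathlib

/-- Untyped λ-terms in de Bruijn notation. -/
inductive Lam : Type
  | var : ℕ → Lam
  | app : Lam → Lam → Lam
  | lam : Lam → Lam
  deriving DecidableEq

namespace Lam

/-- Shift by one the free variables with index ≥ `d`. -/
def lift (d : ℕ) : Lam → Lam
  | var n => if n < d then var n else var (n + 1)
  | app M N => app (lift d M) (lift d N)
  | lam M => lam (lift (d + 1) M)

/-- Capture-avoiding substitution of `N` for the free variable of index `n`. -/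
def subst : Lam → ℕ → Lam → Lam
  | var m, n, N => if m = n then N else if n < m then var (m - 1) else var m
  | app M₁ M₂, n, N => app (subst M₁ n N) (subst M₂ n N)
  | lam M, n, N => lam (subst M (n + 1) (lift 0 N))

/-- One-step β-reduction (contraction of a β-redex anywhere in the term). -/
inductive Step : Lam → Lam → Prop
  | beta (M N : Lam) : Step (app (lam M) N) (subst M 0 N)
  | appL {M M' : Lam} (N : Lam) : Step M M' → Step (app M N) (app M' N)
  | appR (M : Lam) {N N' : Lam} : Step N N' → Step (app M N) (app M N')
  | lam {M M' : Lam} : Step M M' → Step (Lam.lam M) (Lam.lam M')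

/-- β-equivalence: the equivalence relation generated by one-step β-reduction. -/
def BetaEq : Lam → Lam → Prop := Relation.EqvGen Step

/-- The variable of index `n` occurs free in the term. -/
def HasFree : Lam → ℕ → Prop
  | var m, n => m = n
  | app M N, n => HasFree M n ∨ HasFree N n
  | lam M, n => HasFree M (n + 1)

/-- A term is closed if it has no free variables. -/
def Closed (M : Lam) : Prop := ∀ n, ¬ HasFree M n

/-- A term is β-normal: it contains no β-redex. -/
def IsBetaNormal : Lam → Prop
  | app (lam _) _ => False
  | app M N => IsBetaNormal M ∧ IsBetaNormal N
  | lam M => IsBetaNormal M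
  | var _ => True

/-- A term is βη-normal: it contains no β-redex and no η-redex
`λx.(M x)` with `x` not free in `M`. -/
def IsBetaEtaNormal : Lam → Prop
  | app (lam _) _ => False
  | app M N => IsBetaEtaNormal M ∧ IsBetaEtaNormal N
  | lam (app M (var 0)) => HasFree M 0 ∧ IsBetaEtaNormal (app M (var 0))
  | lam M => IsBetaEtaNormal M
  | var _ => True

/-- `I = λx.x`. -/
def I : Lam := lam (var 0)

/-- `T = λxλy.x`. -/
def T : Lam := lam (lam (var 1))

/-- `F = λxλy.y`. -/
def F : Lam := lam (lam (var 0))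

/-- The pair `<M,N> = λx.(x M N)` (the binder shifts the free variables of `M,N`). -/
def pair (M N : Lam) : Lam := lam (app (app (var 0) (lift 0 M)) (lift 0 N))

end Lam

namespace Lam

/-! ### Basic infrastructure -/

/-- Iterated application. -/
def apps (M : Lam) (L : List Lam) : Lam := L.foldl app M

/-- Iterated abstraction. -/
def lamN : ℕ → Lam → Lam
  | 0, M => M
  | n+1, M => lam (lamN n M)

/-- Size of a term. -/
def siz : Lam → ℕ
  | var _ => 1
  | app A B => siz A + siz B + 1
  | lam A => siz A + 1

@[simp] lemma apps_nil (M : Lam) : apps M [] = M := rfl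
@[simp] lemma apps_cons (M X : Lam) (L : List Lam) :
    apps M (X :: L) = apps (app M X) L := rfl

lemma apps_append (M : Lam) (L R : List Lam) :
    apps M (L ++ R) = apps (apps M L) R := by
  simp [apps, List.foldl_append]

@[simp] lemma lamN_zero (M : Lam) : lamN 0 M = M := rfl
@[simp] lemma lamN_succ (n : ℕ) (M : Lam) : lamN (n+1) M = lam (lamN n M) := rfl

lemma lamN_succ' (n : ℕ) (M : Lam) : lamN (n+1) M = lamN n (lam M) := by
  induction n generalizing M with
  | zero => rfl
  | succ n ih => show lam (lamN (n+1) M) = lam (lamN n (lam M)); rw [ih]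

lemma siz_pos (M : Lam) : 0 < siz M := by
  cases M <;> simp [siz] <;> omega

lemma siz_lamN (p : ℕ) (M : Lam) : siz (lamN p M) = p + siz M := by
  induction p with
  | zero => simp [lamN]
  | succ p ih => show siz (lamN p M) + 1 = _
                 rw [ih]
                 omega

lemma siz_apps (M : Lam) (L : List Lam) :
    siz (apps M L) = siz M + (L.map (fun A => siz A + 1)).sum := by
  induction L generalizing M with
  | nil => simp
  | cons X L ih => simp [ih, siz]; omega

/-! ### HasFree lemmas -/

@[simp] lemma hasFree_var (m n : ℕ) : HasFree (var m) n ↔ m = n := Iff.rfl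
@[simp] lemma hasFree_app (A B : Lam) (n : ℕ) :
    HasFree (app A B) n ↔ HasFree A n ∨ HasFree B n := Iff.rfl
@[simp] lemma hasFree_lam (A : Lam) (n : ℕ) :
    HasFree (lam A) n ↔ HasFree A (n+1) := Iff.rfl

lemma hasFree_apps (M : Lam) (L : List Lam) (n : ℕ) :
    HasFree (apps M L) n ↔ HasFree M n ∨ ∃ A ∈ L, HasFree A n := by
  induction L generalizing M with
  | nil => simp
  | cons X L ih =>
    rw [apps_cons, ih, hasFree_app]
    constructor
    · rintro ((h | h) | ⟨A, hA, h⟩)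
      · exact Or.inl h
      · exact Or.inr ⟨X, List.mem_cons_self, h⟩
      · exact Or.inr ⟨A, List.mem_cons_of_mem _ hA, h⟩
    · rintro (h | ⟨A, hA, h⟩)
      · exact Or.inl (Or.inl h)
      · rcases List.mem_cons.1 hA with rfl | hA
        · exact Or.inl (Or.inr h)
        · exact Or.inr ⟨A, hA, h⟩

lemma hasFree_lamN (p : ℕ) (M : Lam) (n : ℕ) :
    HasFree (lamN p M) n ↔ HasFree M (n + p) := by
  induction p generalizing n with
  | zero => simp
  | succ p ih =>
    rw [lamN_succ, hasFree_lam, ih]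
    have e : n + 1 + p = n + (p + 1) := by omega
    rw [e]

lemma hasFree_lift (A : Lam) (t n : ℕ) :
    HasFree (lift t A) n ↔ (n < t ∧ HasFree A n) ∨ (t < n ∧ HasFree A (n-1)) := by
  induction A generalizing t n with
  | var m =>
    simp only [lift]
    split
    · rename_i hmt
      simp only [hasFree_var]
      constructor
      · rintro rfl; exact Or.inl ⟨hmt, rfl⟩
      · rintro (⟨_, rfl⟩ | ⟨h1, h2⟩)
        · rfl
        · have h2' : m = n - 1 := h2
          omega
    · rename_i hmt
      simp only [hasFree_var]
      constructor
      · rintro rfl; right; refine ⟨by omega, ?_⟩; show m = m + 1 - 1; omega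
      · rintro (⟨h1, rfl⟩ | ⟨h1, h2⟩)
        · omega
        · have h2' : m = n - 1 := h2
          omega
  | app A B ihA ihB =>
    show HasFree (app _ _) n ↔ _
    rw [hasFree_app, ihA, ihB, hasFree_app, hasFree_app]
    tauto
  | lam A ih =>
    simp only [lift, hasFree_lam, ih]
    constructor
    · rintro (⟨h1, h2⟩ | ⟨h1, h2⟩)
      · exact Or.inl ⟨by omega, h2⟩
      · right
        refine ⟨by omega, ?_⟩
        have e : n - 1 + 1 = n + 1 - 1 := by omega
        rw [e]; exact h2
    · rintro (⟨h1, h2⟩ | ⟨h1, h2⟩)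
      · exact Or.inl ⟨by omega, h2⟩
      · right
        refine ⟨by omega, ?_⟩
        have e : n + 1 - 1 = n - 1 + 1 := by omega
        rw [e]; exact h2

/-- `lift t` leaves a term unchanged whose free variables are all `< t`. -/
lemma lift_bounded {A : Lam} {t : ℕ} (h : ∀ n, HasFree A n → n < t) :
    lift t A = A := by
  induction A generalizing t with
  | var m =>
    have := h m rfl
    simp [lift, this]
  | app A B ihA ihB =>
    simp only [lift]
    rw [ihA (fun n hn => h n (Or.inl hn)), ihB (fun n hn => h n (Or.inr hn))]
  | lam A ih =>
    simp only [lift]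
    rw [ih]
    intro n hn
    cases n with
    | zero => omega
    | succ n => have := h n hn; omega

lemma lift_closed {A : Lam} (h : Closed A) (t : ℕ) : lift t A = A :=
  lift_bounded (fun n hn => absurd hn (h n))

/-- `subst` at index `t` leaves a term unchanged whose free variables are all `< t`. -/
lemma subst_bounded {A : Lam} {t : ℕ} (N : Lam) (h : ∀ n, HasFree A n → n < t) :
    subst A t N = A := by
  induction A generalizing t N with
  | var m =>
    have hm := h m rfl
    have h1 : m ≠ t := by omega
    have h2 : ¬ t < m := by omega
    simp [subst, h1, h2]
  | app A B ihA ihB =>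
    simp only [subst]
    rw [ihA _ (fun n hn => h n (Or.inl hn)), ihB _ (fun n hn => h n (Or.inr hn))]
  | lam A ih =>
    simp only [subst]
    rw [ih]
    intro n hn
    cases n with
    | zero => omega
    | succ n => have := h n hn; omega

lemma subst_closed {A : Lam} (h : Closed A) (t : ℕ) (N : Lam) : subst A t N = A :=
  subst_bounded N (fun n hn => absurd hn (h n))

lemma siz_lift (A : Lam) (t : ℕ) : siz (lift t A) = siz A := by
  induction A generalizing t with
  | var m => simp [lift]; split <;> rfl
  | app A B ihA ihB => simp [lift, siz, ihA, ihB]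
  | lam A ih => simp [lift, siz, ih]


/-! ### Simultaneous instantiation with closed values -/

/-- Environment shift when crossing a binder. -/
def envUp (σ : ℕ → Lam) : ℕ → Lam
  | 0 => var 0
  | i+1 => lift 0 (σ i)

/-- Simultaneous substitution of `σ i` for free variable `i`. -/
def inst (σ : ℕ → Lam) : Lam → Lam
  | var i => σ i
  | app A B => app (inst σ A) (inst σ B)
  | lam A => lam (inst (envUp σ) A)

@[simp] lemma inst_var (σ : ℕ → Lam) (i : ℕ) : inst σ (var i) = σ i := rfl
@[simp] lemma inst_app (σ : ℕ → Lam) (A B : Lam) :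
    inst σ (app A B) = app (inst σ A) (inst σ B) := rfl
@[simp] lemma inst_lam (σ : ℕ → Lam) (A : Lam) :
    inst σ (lam A) = lam (inst (envUp σ) A) := rfl

def ClosedEnv (σ : ℕ → Lam) : Prop := ∀ i, Closed (σ i)

/-- Extend an environment with identity on the first `t` variables. -/
def extend (t : ℕ) (σ : ℕ → Lam) : ℕ → Lam :=
  fun i => if i < t then var i else σ (i - t)

@[simp] lemma extend_zero (σ : ℕ → Lam) : extend 0 σ = σ := by
  funext i; simp [extend]

lemma envUp_extend {σ : ℕ → Lam} (hσ : ClosedEnv σ) (t : ℕ) :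
    envUp (extend t σ) = extend (t+1) σ := by
  funext i
  cases i with
  | zero => simp [envUp, extend]
  | succ i =>
    simp only [envUp, extend]
    by_cases h : i < t
    · simp [h, Nat.succ_lt_succ h, lift]
    · have h' : ¬ i + 1 < t + 1 := by omega
      simp [h, h', lift_closed (hσ _)]

/-- Push a value for the next binder. -/
def push (X : Lam) (σ : ℕ → Lam) : ℕ → Lam
  | 0 => X
  | i+1 => σ i

lemma closedEnv_push {X : Lam} {σ : ℕ → Lam} (hX : Closed X) (hσ : ClosedEnv σ) :
    ClosedEnv (push X σ) := by
  intro i; cases i with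
  | zero => exact hX
  | succ i => exact hσ i

/-- The key substitution-instantiation law (closed values). -/
lemma subst_inst {σ : ℕ → Lam} (hσ : ClosedEnv σ) {X : Lam} (hX : Closed X) :
    ∀ (A : Lam) (t : ℕ),
      subst (inst (extend (t+1) σ) A) t X = inst (extend t (push X σ)) A := by
  intro A
  induction A with
  | var i =>
    intro t
    simp only [inst_var, extend]
    rcases lt_trichotomy i t with h | rfl | h
    · have h1 : i < t + 1 := by omega
      simp only [if_pos h1, if_pos h]
      exact subst_bounded X (fun n hn => by have : i = n := hn; omega)
    · simp only [if_pos (by omega : i < i + 1), if_neg (lt_irrefl i), subst, if_pos rfl]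
      simp [push]
    · have h1 : ¬ i < t + 1 := by omega
      have h2 : ¬ i < t := by omega
      simp only [if_neg h1, if_neg h2]
      rw [subst_closed (hσ _)]
      have e : i - t = (i - (t+1)) + 1 := by omega
      rw [e]; rfl
  | app A B ihA ihB => intro t; simp [subst, ihA, ihB]
  | lam A ih =>
    intro t
    simp only [inst_lam, subst]
    rw [envUp_extend hσ, envUp_extend (closedEnv_push hX hσ), lift_closed hX, ih]

/-- β-step for instantiated abstractions. -/
lemma betaEq_inst_lam {σ : ℕ → Lam} (hσ : ClosedEnv σ) {X : Lam} (hX : Closed X) (A : Lam) :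
    BetaEq (app (inst σ (lam A)) X) (inst (push X σ) A) := by
  have h := Relation.EqvGen.rel _ _ (Step.beta (inst (envUp σ) A) X)
  have e0 := envUp_extend hσ 0
  rw [extend_zero] at e0
  have e : subst (inst (envUp σ) A) 0 X = inst (push X σ) A := by
    have h2 := subst_inst hσ hX A 0
    rw [extend_zero] at h2
    rw [e0]
    exact h2
  rw [e] at h
  exact h

/-- Instantiation of a closed term does nothing. -/
lemma inst_bounded {σ : ℕ → Lam} (hσ : ClosedEnv σ) :
    ∀ (A : Lam) (t : ℕ), (∀ n, HasFree A n → n < t) → inst (extend t σ) A = A := by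
  intro A
  induction A with
  | var i => intro t h; simp [extend, h i rfl]
  | app A B ihA ihB =>
    intro t h
    simp [ihA t (fun n hn => h n (Or.inl hn)), ihB t (fun n hn => h n (Or.inr hn))]
  | lam A ih =>
    intro t h
    simp only [inst_lam]
    rw [envUp_extend hσ, ih (t+1)]
    intro n hn
    cases n with
    | zero => omega
    | succ n => have := h n hn; omega

lemma inst_closed {σ : ℕ → Lam} (hσ : ClosedEnv σ) {A : Lam} (hA : Closed A) :
    inst σ A = A := by
  have := inst_bounded hσ A 0 (fun n hn => absurd hn (hA n))
  simpa using this

/-- Instantiation with closed environment yields a closed term. -/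
lemma closed_inst {σ : ℕ → Lam} (hσ : ClosedEnv σ) :
    ∀ (A : Lam) (t n : ℕ), HasFree (inst (extend t σ) A) n → n < t := by
  intro A
  induction A with
  | var i =>
    intro t n h
    simp only [inst_var, extend] at h
    split at h
    · have : i = n := h
      omega
    · exact absurd h (hσ _ n)
  | app A B ihA ihB =>
    intro t n h
    rcases h with h | h
    · exact ihA t n h
    · exact ihB t n h
  | lam A ih =>
    intro t n h
    simp only [inst_lam, hasFree_lam] at h
    rw [envUp_extend hσ] at h
    have := ih (t+1) (n+1) h
    omega

lemma closed_inst' {σ : ℕ → Lam} (hσ : ClosedEnv σ) (A : Lam) : Closed (inst σ A) := by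
  intro n h
  have h' : HasFree (inst (extend 0 σ) A) n := by simpa using h
  have := closed_inst hσ A 0 n h'
  omega

/-- Instantiation along `lift`. -/
lemma inst_lift {σ : ℕ → Lam} (hσ : ClosedEnv σ) :
    ∀ (A : Lam) (t : ℕ),
      inst (extend t σ) (lift t A) = inst (extend t (fun i => σ (i+1))) A := by
  intro A
  induction A with
  | var i =>
    intro t
    simp only [lift]
    split
    · rename_i h; simp [extend, h]
    · rename_i h
      have h1 : ¬ i + 1 < t := by omega
      have h2 : ¬ i < t := by omega
      simp only [inst_var, extend, if_neg h1, if_neg h2]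
      have e : i + 1 - t = (i - t) + 1 := by omega
      rw [e]
  | app A B ihA ihB => intro t; simp [lift, ihA, ihB]
  | lam A ih =>
    intro t
    simp only [lift, inst_lam]
    rw [envUp_extend hσ, envUp_extend (fun i => hσ (i+1)), ih]
  
/-- Shift all free variables up by `c`. -/
def shiftN (c : ℕ) (A : Lam) : Lam := (lift 0)^[c] A

@[simp] lemma shiftN_zero (A : Lam) : shiftN 0 A = A := rfl
lemma shiftN_succ (c : ℕ) (A : Lam) : shiftN (c+1) A = shiftN c (lift 0 A) := by
  simp [shiftN, Function.iterate_succ_apply]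

lemma inst_shiftN {σ : ℕ → Lam} (hσ : ClosedEnv σ) (c : ℕ) :
    ∀ (A : Lam), inst σ (shiftN c A) = inst (fun i => σ (i + c)) A := by
  induction c with
  | zero => intro A; simp
  | succ c ih =>
    intro A
    rw [shiftN_succ, ih]
    have h : ∀ i, Closed ((fun i => σ (i + c)) i) := fun i => hσ _
    have := inst_lift h (A := A) (t := 0)
    simp only [extend_zero] at this
    rw [this]
    congr 1
    funext i
    congr 1
    omega

lemma siz_shiftN (c : ℕ) (A : Lam) : siz (shiftN c A) = siz A := by
  induction c generalizing A with
  | zero => rfl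
  | succ c ih => rw [shiftN_succ, ih, siz_lift]

lemma shiftN_succ' (c : ℕ) (A : Lam) : shiftN (c+1) A = lift 0 (shiftN c A) := by
  simp [shiftN, Function.iterate_succ_apply']

lemma hasFree_shiftN {c n : ℕ} {A : Lam} (h : HasFree (shiftN c A) n) : c ≤ n := by
  induction c generalizing n with
  | zero => omega
  | succ c ih =>
    rw [shiftN_succ'] at h
    rcases (hasFree_lift _ 0 n).1 h with ⟨h1, _⟩ | ⟨h1, h2⟩
    · omega
    · have := ih h2
      omega

/-! ### β-equivalence toolkit -/

lemma BetaEq.refl' (M : Lam) : BetaEq M M := Relation.EqvGen.refl M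
lemma BetaEq.symm' {M N : Lam} (h : BetaEq M N) : BetaEq N M := Relation.EqvGen.symm _ _ h
lemma BetaEq.trans' {M N P : Lam} (h1 : BetaEq M N) (h2 : BetaEq N P) : BetaEq M P :=
  Relation.EqvGen.trans _ _ _ h1 h2
lemma BetaEq.of_step {M N : Lam} (h : Step M N) : BetaEq M N := Relation.EqvGen.rel _ _ h

lemma BetaEq.appL {M M' : Lam} (N : Lam) (h : BetaEq M M') :
    BetaEq (app M N) (app M' N) := by
  induction h with
  | rel a b hab => exact .of_step (Step.appL N hab)
  | refl a => exact .refl' _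
  | symm a b _ ih => exact ih.symm'
  | trans a b c _ _ ih1 ih2 => exact ih1.trans' ih2

lemma BetaEq.appR (M : Lam) {N N' : Lam} (h : BetaEq N N') :
    BetaEq (app M N) (app M N') := by
  induction h with
  | rel a b hab => exact .of_step (Step.appR M hab)
  | refl a => exact .refl' _
  | symm a b _ ih => exact ih.symm'
  | trans a b c _ _ ih1 ih2 => exact ih1.trans' ih2

lemma BetaEq.app_congr {M M' N N' : Lam} (h1 : BetaEq M M') (h2 : BetaEq N N') :
    BetaEq (app M N) (app M' N') :=
  (BetaEq.appL N h1).trans' (BetaEq.appR M' h2)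

lemma BetaEq.apps_congL {M M' : Lam} (L : List Lam) (h : BetaEq M M') :
    BetaEq (apps M L) (apps M' L) := by
  induction L generalizing M M' with
  | nil => exact h
  | cons X L ih => exact ih (h.appL X)

/-- Multi-beta: applying an instantiated `lamN` to a list of closed arguments. -/
def pushList (W : List Lam) (σ : ℕ → Lam) : ℕ → Lam :=
  fun i => if h : i < W.length then W[W.length - 1 - i] else σ (i - W.length)

@[simp] lemma pushList_nil (σ : ℕ → Lam) : pushList [] σ = σ := by
  funext i; simp [pushList]

lemma pushList_cons (X : Lam) (W : List Lam) (σ : ℕ → Lam) :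
    pushList (X :: W) σ = pushList W (push X σ) := by
  funext i
  simp only [pushList, List.length_cons]
  by_cases h : i < W.length
  · have h1 : i < W.length + 1 := by omega
    simp only [dif_pos h, dif_pos h1]
    have e : W.length + 1 - 1 - i = (W.length - 1 - i) + 1 := by omega
    rw [List.getElem_cons]
    simp only [e]
    split
    · omega
    · congr 1
  · by_cases h2 : i = W.length
    · subst h2
      have h1 : W.length < W.length + 1 := by omega
      simp only [dif_pos h1, dif_neg h]
      have e : W.length + 1 - 1 - W.length = 0 := by omega
      simp only [e, List.getElem_cons_zero]
      have e2 : W.length - W.length = 0 := by omega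
      rw [e2]
      rfl
    · have h1 : ¬ i < W.length + 1 := by omega
      simp only [dif_neg h1, dif_neg h]
      have e : i - W.length = (i - (W.length + 1)) + 1 := by omega
      rw [e]
      rfl

lemma closedEnv_pushList {W : List Lam} {σ : ℕ → Lam}
    (hW : ∀ X ∈ W, Closed X) (hσ : ClosedEnv σ) : ClosedEnv (pushList W σ) := by
  intro i
  simp only [pushList]
  split
  · exact hW _ (List.getElem_mem _)
  · exact hσ _

lemma pushList_lt {W : List Lam} {σ : ℕ → Lam} {i : ℕ} (h : i < W.length) :
    pushList W σ i = W[W.length - 1 - i] := by simp [pushList, h]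

lemma pushList_ge {W : List Lam} {σ : ℕ → Lam} {i : ℕ} (h : ¬ i < W.length) :
    pushList W σ i = σ (i - W.length) := by simp [pushList, h]

lemma betaN {σ : ℕ → Lam} (hσ : ClosedEnv σ) :
    ∀ (W : List Lam), (∀ X ∈ W, Closed X) → ∀ (body : Lam) (rest : List Lam),
      BetaEq (apps (inst σ (lamN W.length body)) (W ++ rest))
             (apps (inst (pushList W σ) body) rest) := by
  intro W
  induction W generalizing σ with
  | nil => intro _ body rest; simp; exact .refl' _
  | cons X W ih =>
    intro hcl body rest
    have hX : Closed X := hcl X List.mem_cons_self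
    have hW : ∀ Y ∈ W, Closed Y := fun Y hY => hcl Y (List.mem_cons_of_mem _ hY)
    show BetaEq (apps (app (inst σ (lam (lamN W.length body))) X) (W ++ rest)) _
    have h1 := betaEq_inst_lam hσ hX (lamN W.length body)
    have h2 := BetaEq.apps_congL (W ++ rest) h1
    refine h2.trans' ?_
    rw [pushList_cons]
    exact ih (closedEnv_push hX hσ) hW body rest

lemma inst_apps (σ : ℕ → Lam) (X : Lam) (L : List Lam) :
    inst σ (apps X L) = apps (inst σ X) (L.map (inst σ)) := by
  induction L generalizing X with
  | nil => rfl
  | cons Y L ih => simp [ih]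

/-! ### Combinators -/

/-- Permutator `π_k = λ x₁ … x_k z. z x₁ … x_k`. -/
def perm (k : ℕ) : Lam :=
  lamN (k+1) (apps (var 0) ((List.range k).map fun i => var (k - i)))

/-- Selector `λ x₁ … x_k. x_{j+1}` (0-based j). -/
def sel (k j : ℕ) : Lam := lamN k (var (k - 1 - j))

/-- Constant function with `n` arguments. -/
def kill (n : ℕ) (C : Lam) : Lam := lamN n C

lemma closed_lamN_bounded {p : ℕ} {M : Lam} (h : ∀ n, HasFree M n → n < p) :
    Closed (lamN p M) := by
  intro n hn
  rw [hasFree_lamN] at hn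
  have := h _ hn
  omega

lemma closed_perm (k : ℕ) : Closed (perm k) := by
  apply closed_lamN_bounded
  intro n hn
  rw [hasFree_apps] at hn
  rcases hn with h | ⟨A, hA, h⟩
  · have : (0 : ℕ) = n := h
    omega
  · simp only [List.mem_map, List.mem_range] at hA
    obtain ⟨i, hi, rfl⟩ := hA
    have : k - i = n := h
    omega

lemma closed_sel {k j : ℕ} (h : j < k) : Closed (sel k j) := by
  apply closed_lamN_bounded
  intro n hn
  have : k - 1 - j = n := hn
  omega

lemma closed_kill {n : ℕ} {C : Lam} (h : Closed C) : Closed (kill n C) := by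
  apply closed_lamN_bounded
  intro m hm
  exact absurd hm (h m)

lemma closed_T : Closed T := by
  intro n hn
  simp only [T, hasFree_lam, hasFree_var] at hn
  omega

lemma closed_F : Closed F := by
  intro n hn
  simp only [F, hasFree_lam, hasFree_var] at hn
  omega

lemma closed_I : Closed I := by
  intro n hn
  simp only [I, hasFree_lam, hasFree_var] at hn
  omega

/-- A default closed environment used to view closed terms via `inst`. -/
def cenv : ℕ → Lam := fun _ => T

lemma closedEnv_cenv : ClosedEnv cenv := fun _ => closed_T

lemma getElem_idx_congr {α : Type*} (l : List α) {i j : ℕ} (h : i = j) (hi : i < l.length) :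
    l[i] = l[j]'(h ▸ hi) := by subst h; rfl

lemma perm_fact {k : ℕ} {V : List Lam} {Z : Lam}
    (hV : V.length = k) (hcl : ∀ X ∈ V, Closed X) (hZ : Closed Z) :
    BetaEq (apps (perm k) (V ++ [Z])) (apps Z V) := by
  have hP : Closed (perm k) := closed_perm k
  have e : perm k = inst cenv (perm k) := (inst_closed closedEnv_cenv hP).symm
  rw [e]
  have hlen : (V ++ [Z]).length = k + 1 := by simp [hV]
  have hcl' : ∀ X ∈ V ++ [Z], Closed X := by
    intro X hX
    rcases List.mem_append.1 hX with h | h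
    · exact hcl X h
    · rcases List.mem_singleton.1 h with rfl
      exact hZ
  have hb := betaN closedEnv_cenv (V ++ [Z]) hcl'
      (apps (var 0) ((List.range k).map fun i => var (k - i))) []
  rw [hlen] at hb
  simp only [List.append_nil, apps_nil] at hb
  unfold perm
  refine hb.trans' ?_
  have e0 : (pushList (V ++ [Z]) cenv) 0 = Z := by
    rw [pushList_lt (by simp)]
    have h1 : (V ++ [Z]).length - 1 - 0 = V.length := by simp
    rw [getElem_idx_congr _ h1, List.getElem_append_right (le_refl _)]
    simp
  have eargs : ((List.range k).map fun i => var (k - i)).map (inst (pushList (V ++ [Z]) cenv)) = V := by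
    apply List.ext_getElem
    · simp [hV]
    · intro i h1 h2
      simp only [List.getElem_map, List.getElem_range, inst_var]
      have hik : i < k := by omega
      rw [pushList_lt (by simp [hV])]
      have e1 : (V ++ [Z]).length - 1 - (k - i) = i := by simp [hV]; omega
      rw [getElem_idx_congr _ e1, List.getElem_append_left h2]
  rw [inst_apps]
  simp only [inst_var]
  rw [e0, eargs]
  exact .refl' _

lemma sel_fact {k j : ℕ} {V : List Lam} (hj : j < k)
    (hV : V.length = k) (hcl : ∀ X ∈ V, Closed X) :
    BetaEq (apps (sel k j) V) (V[j]'(by omega)) := by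
  have e : sel k j = inst cenv (sel k j) := (inst_closed closedEnv_cenv (closed_sel hj)).symm
  rw [e]
  have hb := betaN closedEnv_cenv V hcl (var (k - 1 - j)) []
  rw [hV] at hb
  simp only [List.append_nil, apps_nil] at hb
  unfold sel
  refine hb.trans' ?_
  simp only [inst_var]
  rw [pushList_lt (by omega)]
  have e1 : V.length - 1 - (k - 1 - j) = j := by omega
  rw [getElem_idx_congr _ e1]
  exact .refl' _

lemma kill_fact {n : ℕ} {C : Lam} {V : List Lam} (hC : Closed C)
    (hV : V.length = n) (hcl : ∀ X ∈ V, Closed X) :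
    BetaEq (apps (kill n C) V) C := by
  have e : kill n C = inst cenv (kill n C) := (inst_closed closedEnv_cenv (closed_kill hC)).symm
  rw [e]
  have hb := betaN closedEnv_cenv V hcl C []
  rw [hV] at hb
  simp only [List.append_nil, apps_nil] at hb
  unfold kill
  refine hb.trans' ?_
  rw [inst_closed (closedEnv_pushList hcl closedEnv_cenv) hC]
  exact .refl' _

/-! ### T/F computation facts -/

lemma betaEq_T_app {X : Lam} (hX : Closed X) : BetaEq (app T X) (lam X) := by
  have h := Relation.EqvGen.rel _ _ (Step.beta (lam (var 1)) X)
  have e : subst (lam (var 1)) 0 X = lam X := by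
    simp [subst, lift_closed hX]
  rw [e] at h
  exact h

lemma betaEq_T_app2 {X Y : Lam} (hX : Closed X) (hY : Closed Y) :
    BetaEq (app (app T X) Y) X := by
  refine (BetaEq.appL Y (betaEq_T_app hX)).trans' ?_
  have h := Relation.EqvGen.rel _ _ (Step.beta X Y)
  have e : subst X 0 Y = X := subst_closed hX 0 Y
  rw [e] at h
  exact h

lemma betaEq_F_app {X : Lam} (hX : Closed X) : BetaEq (app F X) I := by
  have h := Relation.EqvGen.rel _ _ (Step.beta (lam (var 0)) X)
  have e : subst (lam (var 0)) 0 X = I := by simp [subst, I]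
  rw [e] at h
  exact h

lemma betaEq_I_app (Y : Lam) : BetaEq (app I Y) Y := by
  have h := Relation.EqvGen.rel _ _ (Step.beta (var 0) Y)
  have e : subst (var 0) 0 Y = Y := by simp [subst]
  rw [e] at h
  exact h

lemma betaEq_F_app2 {X : Lam} (hX : Closed X) (Y : Lam) :
    BetaEq (app (app F X) Y) Y :=
  ((BetaEq.appL Y (betaEq_F_app hX)).trans' (betaEq_I_app Y))

lemma lam_I_eq_F : lam I = F := rfl

/-! ### Separability -/

/-- `P` and `Q` are separable to `T` and `F` by application of closed terms. -/
def Sep (P Q : Lam) : Prop :=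
  ∃ L : List Lam, (∀ X ∈ L, Closed X) ∧ BetaEq (apps P L) T ∧ BetaEq (apps Q L) F

lemma Sep.swap {P Q : Lam} (h : Sep P Q) : Sep Q P := by
  obtain ⟨L, hcl, hT, hF⟩ := h
  refine ⟨L ++ [F, T], ?_, ?_, ?_⟩
  · intro X hX
    rcases List.mem_append.1 hX with h | h
    · exact hcl X h
    · rcases List.mem_cons.1 h with rfl | h
      · exact closed_F
      · rcases List.mem_cons.1 h with rfl | h
        · exact closed_T
        · cases h
  · rw [apps_append]
    refine (BetaEq.apps_congL _ hF).trans' ?_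
    show BetaEq (app (app F F) T) T
    exact betaEq_F_app2 closed_F T
  · rw [apps_append]
    refine (BetaEq.apps_congL _ hT).trans' ?_
    show BetaEq (app (app T F) T) F
    exact betaEq_T_app2 closed_F closed_T

/-! ### Normal forms -/

@[simp] lemma nrm_var (n : ℕ) : IsBetaEtaNormal (var n) := by
  simp [IsBetaEtaNormal]

lemma nrm_lam_elim {A : Lam} (h : IsBetaEtaNormal (lam A)) : IsBetaEtaNormal A := by
  cases A with
  | var n => simp
  | lam B => exact h
  | app B C =>
    cases C with
    | var m =>
      cases m with
      | zero => exact h.2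
      | succ m => exact h
    | app _ _ => exact h
    | lam _ => exact h

lemma nrm_app_elim {A B : Lam} (h : IsBetaEtaNormal (app A B)) :
    IsBetaEtaNormal A ∧ IsBetaEtaNormal B ∧ ∀ C, A ≠ lam C := by
  cases A with
  | var n => exact ⟨h.1, h.2, fun C hC => by cases hC⟩
  | app A1 A2 => exact ⟨h.1, h.2, fun C hC => by cases hC⟩
  | lam A1 => exact absurd h (by simp [IsBetaEtaNormal])

lemma nrm_app_intro {A B : Lam} (hA : IsBetaEtaNormal A) (hB : IsBetaEtaNormal B)
    (hnl : ∀ C, A ≠ lam C) : IsBetaEtaNormal (app A B) := by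
  cases A with
  | var n => exact ⟨hA, hB⟩
  | app A1 A2 => exact ⟨hA, hB⟩
  | lam A1 => exact absurd rfl (hnl A1)

lemma nrm_lam_eta {A : Lam} (h : IsBetaEtaNormal (lam (app A (var 0)))) :
    HasFree A 0 := h.1

lemma nrm_lam_intro {A : Lam} (hA : IsBetaEtaNormal A)
    (heta : ∀ B, A = app B (var 0) → HasFree B 0) : IsBetaEtaNormal (lam A) := by
  cases A with
  | var n => simp [IsBetaEtaNormal]
  | lam B => exact hA
  | app B C =>
    cases C with
    | var m =>
      cases m with
      | zero => exact ⟨heta B rfl, hA⟩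
      | succ m => exact hA
    | app _ _ => exact hA
    | lam _ => exact hA

lemma nrm_lift {A : Lam} (h : IsBetaEtaNormal A) : ∀ t, IsBetaEtaNormal (lift t A) := by
  induction A with
  | var n => intro t; simp [lift]; split <;> simp
  | app A B ihA ihB =>
    intro t
    obtain ⟨hA, hB, hnl⟩ := nrm_app_elim h
    show IsBetaEtaNormal (app (lift t A) (lift t B))
    refine nrm_app_intro (ihA hA t) (ihB hB t) ?_
    intro C hC
    cases A with
    | var n => simp only [lift] at hC; split at hC <;> cases hC
    | app _ _ => cases hC
    | lam A1 => exact absurd rfl (hnl A1)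
  | lam A ih =>
    intro t
    have hA := nrm_lam_elim h
    show IsBetaEtaNormal (lam (lift (t+1) A))
    refine nrm_lam_intro (ih hA (t+1)) ?_
    intro B hB
    -- lift (t+1) A = app B (var 0) forces A = app B' (var 0) with lift (t+1) B' = B
    cases A with
    | var n => simp only [lift] at hB; split at hB <;> cases hB
    | lam _ => cases hB
    | app A1 A2 =>
      simp only [lift] at hB
      injection hB with hB1 hB2
      cases A2 with
      | var m =>
        simp only [lift] at hB2
        split at hB2
        · injection hB2 with hm
          subst hm
          rename_i hmt
          have hfree : HasFree A1 0 := by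
            have := h.1
            exact this
          subst hB1
          rw [hasFree_lift]
          exact Or.inl ⟨by omega, hfree⟩
        · injection hB2 with hm; omega
      | app _ _ => cases hB2
      | lam _ => cases hB2

/-- Structure of βη-normal forms. -/
lemma nf_view {M : Lam} (h : IsBetaEtaNormal M) :
    ∃ p h' As, M = lamN p (apps (var h') As) ∧ ∀ A ∈ As, IsBetaEtaNormal A := by
  induction M with
  | var n => exact ⟨0, n, [], rfl, by simp⟩
  | lam A ih =>
    obtain ⟨p, h', As, rfl, hAs⟩ := ih (nrm_lam_elim h)
    exact ⟨p+1, h', As, rfl, hAs⟩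
  | app A B ihA ihB =>
    obtain ⟨hA, hB, hnl⟩ := nrm_app_elim h
    obtain ⟨p, h', As, hE, hAs⟩ := ihA hA
    cases p with
    | succ p => exact absurd hE (hnl _)
    | zero =>
      simp only [lamN_zero] at hE
      refine ⟨0, h', As ++ [B], ?_, ?_⟩
      · simp only [lamN_zero, apps_append, hE, apps_cons, apps_nil]
      · intro X hX
        rcases List.mem_append.1 hX with h1 | h1
        · exact hAs X h1
        · rcases List.mem_singleton.1 h1 with rfl
          exact hB

lemma subst_apps (X : Lam) (L : List Lam) (t : ℕ) (D : Lam) :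
    subst (apps X L) t D = apps (subst X t D) (L.map (fun A => subst A t D)) := by
  induction L generalizing X with
  | nil => rfl
  | cons Y L ih => simp only [apps_cons, ih, List.map_cons, subst]


/-! ### Master argument lists -/

/-- `n` scheduled arguments starting at slot `a`. -/
def mkl (a n : ℕ) (spec : ℕ → Lam) : List Lam :=
  (List.range n).map (fun j => spec (a + j))

@[simp] lemma mkl_length (a n : ℕ) (spec : ℕ → Lam) : (mkl a n spec).length = n := by
  simp [mkl]

lemma mkl_getElem (a n : ℕ) (spec : ℕ → Lam) {i : ℕ} (h : i < n) :
    (mkl a n spec)[i]'(by simp [mkl]; omega) = spec (a + i) := by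
  simp [mkl]

lemma mkl_zero (a : ℕ) (spec : ℕ → Lam) : mkl a 0 spec = [] := rfl

lemma mkl_split (a m n : ℕ) (spec : ℕ → Lam) :
    mkl a (m + n) spec = mkl a m spec ++ mkl (a + m) n spec := by
  simp only [mkl, List.range_add, List.map_append, List.map_map]
  congr 1
  apply List.map_congr_left
  intro j _
  simp only [Function.comp_apply]
  congr 1
  omega

lemma mkl_closed {a n : ℕ} {spec : ℕ → Lam} (h : ∀ i, Closed (spec i)) :
    ∀ X ∈ mkl a n spec, Closed X := by
  intro X hX
  simp only [mkl, List.mem_map, List.mem_range] at hX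
  obtain ⟨j, _, rfl⟩ := hX
  exact h _

lemma pushList_mkl (spec : ℕ → Lam) (σ : ℕ → Lam) (p : ℕ) (i : ℕ) :
    pushList (mkl 0 p spec) σ i = if i < p then spec (p - 1 - i) else σ (i - p) := by
  by_cases h : i < p
  · rw [pushList_lt (by simp [mkl]; omega), if_pos h]
    rw [mkl_getElem _ _ _ (by simp; omega)]
    simp
  · rw [pushList_ge (by simp [mkl]; omega), if_neg h]
    simp

/-! ### The head reduction lemma -/

lemma head_red {σ : ℕ → Lam} (hσ : ClosedEnv σ) (p h : ℕ) (As : List Lam) (k : ℕ)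
    (W W₂ : List Lam) (Z : Lam) (R : List Lam)
    (hW : W.length = p) (hcW : ∀ X ∈ W, Closed X) (hcW₂ : ∀ X ∈ W₂, Closed X)
    (hZ : Closed Z) (hcR : ∀ X ∈ R, Closed X)
    (hhead : pushList W σ h = perm k)
    (hlen : As.length + W₂.length = k) :
    BetaEq (apps (inst σ (lamN p (apps (var h) As))) (W ++ (W₂ ++ Z :: R)))
           (apps (apps Z ((As.map (inst (pushList W σ))) ++ W₂)) R) := by
  subst hW
  have h1 := betaN hσ W hcW (apps (var h) As) (W₂ ++ Z :: R)
  refine h1.trans' ?_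
  rw [inst_apps]
  simp only [inst_var, hhead]
  set As' := As.map (inst (pushList W σ)) with hAs'
  have hcA : ∀ X ∈ As', Closed X := by
    intro X hX
    simp only [hAs', List.mem_map] at hX
    obtain ⟨A, _, rfl⟩ := hX
    exact closed_inst' (closedEnv_pushList hcW hσ) A
  have e1 : W₂ ++ Z :: R = (W₂ ++ [Z]) ++ R := by simp
  rw [e1, ← apps_append]
  have e2 : As' ++ ((W₂ ++ [Z]) ++ R) = ((As' ++ W₂) ++ [Z]) ++ R := by simp
  rw [e2, apps_append]
  refine BetaEq.apps_congL R ?_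
  refine perm_fact ?_ ?_ hZ
  · simp [hAs', hlen]
  · intro X hX
    rcases List.mem_append.1 hX with h | h
    · exact hcA X h
    · exact hcW₂ X h

/-! ### Case lemmas for the separation theorem -/

section Cases

variable (B : ℕ) (e f : ℕ → ℕ)


@[simp] lemma mkl_one (a : ℕ) (spec : ℕ → Lam) : mkl a 1 spec = [spec a] := by
  simp [mkl, List.range_succ]

/-- The full one-node reduction against a scheduled argument list. -/
lemma side_full (e : ℕ → ℕ) (spec : ℕ → Lam) (hspecl : ∀ i, Closed (spec i))
    (p h : ℕ) (As : List Lam) (k tX s : ℕ)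
    (hhead : (if h < p then spec (p - 1 - h) else perm (e (h - p))) = perm k)
    (hlen : As.length + (tX - p) = k) (hptX : p ≤ tX) (htXs : tX ≤ s) :
    BetaEq (apps (inst (fun i => perm (e i)) (lamN p (apps (var h) As))) (mkl 0 (s+1) spec))
           (apps (apps (spec tX)
              ((As.map (inst (pushList (mkl 0 p spec) (fun i => perm (e i))))) ++ mkl p (tX-p) spec))
             (mkl (tX+1) (s-tX) spec)) := by
  have hsplit : mkl 0 (s+1) spec
      = mkl 0 p spec ++ (mkl p (tX-p) spec ++ spec tX :: mkl (tX+1) (s-tX) spec) := by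
    have e1 : s + 1 = p + ((tX-p) + (1 + (s-tX))) := by omega
    rw [e1, mkl_split, mkl_split, mkl_split]
    simp only [mkl_one]
    have e2 : 0 + p = p := by omega
    have e3 : p + (tX - p) = tX := by omega
    have e4 : tX + 1 = tX + 1 := rfl
    rw [e2, e3]
    simp
  rw [hsplit]
  have hσ : ClosedEnv (fun i => perm (e i)) := fun i => closed_perm _
  refine head_red hσ p h As k (mkl 0 p spec) (mkl p (tX-p) spec) (spec tX)
    (mkl (tX+1) (s-tX) spec) (by simp) (mkl_closed hspecl) (mkl_closed hspecl)
    (hspecl tX) (mkl_closed hspecl) ?_ (by simp; omega)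
  rw [pushList_mkl]
  exact hhead

lemma closedEnv_instEnv (e : ℕ → ℕ) : ClosedEnv (fun i => perm (e i)) :=
  fun i => closed_perm _

/-- Ending a side with an exact-arity kill. -/
lemma side_kill (e : ℕ → ℕ) (spec : ℕ → Lam) (hspecl : ∀ i, Closed (spec i))
    (p h : ℕ) (As : List Lam) (k tX s : ℕ) (C : Lam) (hC : Closed C)
    (hhead : (if h < p then spec (p - 1 - h) else perm (e (h - p))) = perm k)
    (hlen : As.length + (tX - p) = k) (hptX : p ≤ tX) (htXs : tX ≤ s)
    (hkill : spec tX = kill (k + (s - tX)) C) :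
    BetaEq (apps (inst (fun i => perm (e i)) (lamN p (apps (var h) As))) (mkl 0 (s+1) spec)) C := by
  refine (side_full e spec hspecl p h As k tX s hhead hlen hptX htXs).trans' ?_
  rw [hkill, ← apps_append]
  refine kill_fact hC ?_ ?_
  · simp
    omega
  · intro X hX
    rcases List.mem_append.1 hX with hX | hX
    · rcases List.mem_append.1 hX with hX | hX
      · simp only [List.mem_map] at hX
        obtain ⟨A, _, rfl⟩ := hX
        exact closed_inst' (closedEnv_pushList (mkl_closed hspecl) (closedEnv_instEnv e)) A
      · exact mkl_closed hspecl X hX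
    · exact mkl_closed hspecl X hX

/-- Case: the two head positions differ.  Pure computation (kill/kill). -/
lemma caseA (hBf : ∀ i, B < f i)
    (p h : ℕ) (As : List Lam) (q g : ℕ) (Bs : List Lam)
    (kM kN tM tN : ℕ)
    (hkM : kM = if h < p then f (p - 1 - h) else e (h - p))
    (hkN : kN = if g < q then f (q - 1 - g) else e (g - q))
    (htM : tM = p + (kM - As.length)) (htN : tN = q + (kN - Bs.length))
    (haM : As.length ≤ kM) (haN : Bs.length ≤ kN)
    (hqtM : q ≤ tM) (hptN : p ≤ tN)
    (hne : tM ≠ tN) :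
    Sep (inst (fun i => perm (e i)) (lamN p (apps (var h) As)))
        (inst (fun i => perm (e i)) (lamN q (apps (var g) Bs))) := by
  classical
  set s := max tM tN with hs
  set spec : ℕ → Lam := fun i =>
    if i = tM then kill (kM + (s - tM)) T
    else if i = tN then kill (kN + (s - tN)) F
    else perm (f i) with hspec
  have hspecl : ∀ i, Closed (spec i) := by
    intro i
    rw [hspec]
    dsimp only
    split
    · exact closed_kill closed_T
    · split
      · exact closed_kill closed_F
      · exact closed_perm _
  have hspec_perm : ∀ i, i ≠ tM → i ≠ tN → spec i = perm (f i) := by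
    intro i h1 h2
    simp [hspec, h1, h2]
  refine ⟨mkl 0 (s+1) spec, mkl_closed hspecl, ?_, ?_⟩
  · refine side_kill e spec hspecl p h As kM tM s T closed_T ?_ (by omega) (by omega)
      (by omega) (by simp [hspec])
    split
    · rename_i hh
      rw [hspec_perm _ (by omega) (by omega), hkM, if_pos hh]
    · rename_i hh
      rw [hkM, if_neg hh]
  · refine side_kill e spec hspecl q g Bs kN tN s F closed_F ?_ (by omega) (by omega)
      (by omega) ?_
    · split
      · rename_i hh
        rw [hspec_perm _ (by omega) (by omega), hkN, if_pos hh]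
      · rename_i hh
        rw [hkN, if_neg hh]
    · simp [hspec]
      intro hEq
      omega


lemma mkl_cons (a n : ℕ) (spec : ℕ → Lam) :
    mkl a (n+1) spec = spec a :: mkl (a+1) n spec := by
  have e1 : n + 1 = 1 + n := by omega
  rw [e1, mkl_split, mkl_one]
  rfl

lemma mkl_const_I (a n : ℕ) (spec : ℕ → Lam) (h : ∀ i, a ≤ i → spec i = I) :
    mkl a n spec = List.replicate n I := by
  induction n generalizing a with
  | zero => simp [mkl_zero]
  | succ n ih =>
    rw [mkl_cons, h a (le_refl a), ih (a+1) (fun i hi => h i (by omega))]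
    rfl

/-- `T` applied to the scheduled extras reduces to `F`. -/
lemma T_extras (c t : ℕ) (hc : 1 ≤ c) (spec : ℕ → Lam)
    (h1 : spec (t+1) = if c = 1 then I else kill (c-2) F)
    (h2 : ∀ i, t+2 ≤ i → spec i = I) :
    BetaEq (apps T (mkl (t+1) c spec)) F := by
  cases c with
  | zero => omega
  | succ c0 =>
  rw [mkl_cons]
  cases c0 with
  | zero =>
    rw [if_pos rfl] at h1
    rw [h1, mkl_zero]
    show BetaEq (app T I) F
    refine (betaEq_T_app closed_I).trans' ?_
    rw [lam_I_eq_F]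
    exact .refl' _
  | succ c' =>
    have hc2 : ¬ (c' + 1 + 1 = 1) := by omega
    rw [if_neg hc2] at h1
    rw [mkl_cons, h1, h2 (t+1+1) (by omega)]
    show BetaEq (apps (app (app T (kill (c'+1+1-2) F)) I) (mkl (t+1+1+1) c' spec)) F
    have hkc : Closed (kill (c'+1+1-2) F) := closed_kill closed_F
    refine (BetaEq.apps_congL _ (betaEq_T_app2 hkc closed_I)).trans' ?_
    rw [mkl_const_I _ _ _ (fun i hi => h2 i (by omega))]
    have e1 : c' + 1 + 1 - 2 = c' := by omega
    rw [e1]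
    refine kill_fact closed_F (by simp) ?_
    intro X hX
    rw [List.eq_of_mem_replicate hX]
    exact closed_I

/-- Case: same head position, different permutator sizes `kM < kN`. -/
lemma caseB (hBf : ∀ i, B < f i)
    (p h : ℕ) (As : List Lam) (q g : ℕ) (Bs : List Lam)
    (kM kN t : ℕ)
    (hkM : kM = if h < p then f (p - 1 - h) else e (h - p))
    (hkN : kN = if g < q then f (q - 1 - g) else e (g - q))
    (htM : t = p + (kM - As.length)) (htN : t = q + (kN - Bs.length))
    (haM : As.length ≤ kM) (haN : Bs.length ≤ kN)
    (hqt : q ≤ t) (hpt : p ≤ t)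
    (hlt : kM < kN) :
    Sep (inst (fun i => perm (e i)) (lamN p (apps (var h) As)))
        (inst (fun i => perm (e i)) (lamN q (apps (var g) Bs))) := by
  classical
  set c := kN - kM with hc
  set s := t + c with hs
  set spec : ℕ → Lam := fun i =>
    if i < t then perm (f i)
    else if i = t then kill kN T
    else if i = t+1 then (if c = 1 then I else kill (c-2) F)
    else I with hspec
  have hspecl : ∀ i, Closed (spec i) := by
    intro i
    rw [hspec]
    dsimp only
    split
    · exact closed_perm _
    · split
      · exact closed_kill closed_T
      · split
        · split
          · exact closed_I
          · exact closed_kill closed_F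
        · exact closed_I
  have hspec_perm : ∀ i, i < t → spec i = perm (f i) := by
    intro i h1
    simp [hspec, h1]
  have hspect : spec t = kill kN T := by simp [hspec]
  refine ⟨mkl 0 (s+1) spec, mkl_closed hspecl, ?_, ?_⟩
  · -- M side: exact-arity kill, kM + (s - t) = kN
    refine side_kill e spec hspecl p h As kM t s T closed_T ?_ (by omega) (by omega)
      (by omega) (by rw [hspect]; congr 1; omega)
    split
    · rename_i hh
      rw [hspec_perm _ (by omega), hkM, if_pos hh]
    · rename_i hh
      rw [hkM, if_neg hh]
  · -- N side
    refine (side_full e spec hspecl q g Bs kN t s ?_ (by omega) (by omega) (by omega)).trans' ?_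
    · split
      · rename_i hh
        rw [hspec_perm _ (by omega), hkN, if_pos hh]
      · rename_i hh
        rw [hkN, if_neg hh]
    · rw [hspect]
      have hkill : BetaEq (apps (kill kN T)
          ((Bs.map (inst (pushList (mkl 0 q spec) (fun i => perm (e i))))) ++ mkl q (t-q) spec)) T := by
        refine kill_fact closed_T (by simp; omega) ?_
        intro X hX
        rcases List.mem_append.1 hX with hX | hX
        · simp only [List.mem_map] at hX
          obtain ⟨A, _, rfl⟩ := hX
          exact closed_inst' (closedEnv_pushList (mkl_closed hspecl) (closedEnv_instEnv e)) A
        · exact mkl_closed hspecl X hX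
      refine (BetaEq.apps_congL _ hkill).trans' ?_
      have e1 : s - t = c := by omega
      rw [e1]
      refine T_extras c t (by omega) spec ?_ ?_
      · simp only [hspec]
        have h1 : ¬ (t + 1 < t) := by omega
        have h2 : ¬ (t + 1 = t) := by omega
        simp [h1, h2]
      · intro i hi
        simp only [hspec]
        have h1 : ¬ (i < t) := by omega
        have h2 : ¬ (i = t) := by omega
        have h3 : ¬ (i = t+1) := by omega
        simp [h1, h2, h3]


lemma nrm_lamN_elim {m : ℕ} {Y : Lam} (h : IsBetaEtaNormal (lamN m Y)) :
    IsBetaEtaNormal Y := by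
  induction m generalizing Y with
  | zero => exact h
  | succ m ih => exact nrm_lam_elim (ih (by rwa [← lamN_succ'] ))

lemma nrm_shiftN {A : Lam} (h : IsBetaEtaNormal A) (c : ℕ) :
    IsBetaEtaNormal (shiftN c A) := by
  induction c generalizing A with
  | zero => exact h
  | succ c ih => rw [shiftN_succ]; exact ih (nrm_lift h 0)

lemma siz_arg_lt {As : List Lam} {p h : ℕ} {A : Lam} (hA : A ∈ As) :
    siz A < siz (lamN p (apps (var h) As)) := by
  rw [siz_lamN, siz_apps]
  have h1 : siz A + 1 ∈ As.map (fun A => siz A + 1) := List.mem_map_of_mem hA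
  have h2 := List.single_le_sum (l := As.map (fun A => siz A + 1))
    (fun x _ => Nat.zero_le x) _ h1
  omega

lemma mkl_split' (a n m : ℕ) (spec : ℕ → Lam) (h : m ≤ n) :
    mkl a n spec = mkl a m spec ++ mkl (a+m) (n-m) spec := by
  conv_lhs => rw [show n = m + (n-m) by omega]
  rw [mkl_split]

/-- Ending a side with a selector. -/
lemma side_sel (e : ℕ → ℕ) (spec : ℕ → Lam) (hspecl : ∀ i, Closed (spec i))
    (p h : ℕ) (As : List Lam) (k t j : ℕ) (R : List Lam) (hR : ∀ X ∈ R, Closed X)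
    (hhead : (if h < p then spec (p - 1 - h) else perm (e (h - p))) = perm k)
    (hlen : As.length + (t - p) = k) (hpt : p ≤ t) (hj : j < k) :
    BetaEq (apps (inst (fun i => perm (e i)) (lamN p (apps (var h) As)))
             ((mkl 0 t spec) ++ (sel k j) :: R))
           (apps ((((As.map (inst (pushList (mkl 0 p spec) (fun i => perm (e i)))))
                ++ mkl p (t-p) spec)[j]'(by
                  simp only [List.length_append, List.length_map, mkl_length]; omega))) R) := by
  have hσ : ClosedEnv (fun i => perm (e i)) := closedEnv_instEnv e
  have hsplit : mkl 0 t spec = mkl 0 p spec ++ mkl p (t-p) spec := by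
    have := mkl_split' 0 t p spec (by omega)
    simpa using this
  rw [hsplit, List.append_assoc]
  have hV : ∀ X ∈ (As.map (inst (pushList (mkl 0 p spec) (fun i => perm (e i)))))
      ++ mkl p (t-p) spec, Closed X := by
    intro X hX
    rcases List.mem_append.1 hX with hX | hX
    · simp only [List.mem_map] at hX
      obtain ⟨A, _, rfl⟩ := hX
      exact closed_inst' (closedEnv_pushList (mkl_closed hspecl) hσ) A
    · exact mkl_closed hspecl X hX
  refine (head_red hσ p h As k (mkl 0 p spec) (mkl p (t-p) spec) (sel k j) R
    (by simp) (mkl_closed hspecl) (mkl_closed hspecl) (closed_sel hj) hR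
    (by rw [pushList_mkl]; exact hhead) (by simp; omega)).trans' ?_
  exact BetaEq.apps_congL R (sel_fact hj (by simp; omega) hV)

set_option maxHeartbeats 2000000 in
/-- Case: same head position and same size (same head).  Needs recursion. -/
lemma caseC (hBe : ∀ i, B < e i) (hBf : ∀ i, B < f i)
    (hei : Function.Injective e) (hfm : StrictMono f) (hef : ∀ i j, e i ≠ f j)
    (p h : ℕ) (As : List Lam) (q g : ℕ) (Bs : List Lam)
    (hNn : IsBetaEtaNormal (lamN q (apps (var g) Bs)))
    (hAs : ∀ A ∈ As, IsBetaEtaNormal A) (hBs : ∀ A ∈ Bs, IsBetaEtaNormal A)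
    (hB : siz (lamN p (apps (var h) As)) + siz (lamN q (apps (var g) Bs)) ≤ B)
    (hne : lamN p (apps (var h) As) ≠ lamN q (apps (var g) Bs))
    (kM kN t : ℕ)
    (hkM : kM = if h < p then f (p - 1 - h) else e (h - p))
    (hkN : kN = if g < q then f (q - 1 - g) else e (g - q))
    (htM : t = p + (kM - As.length)) (htN : t = q + (kN - Bs.length))
    (haM : As.length ≤ kM) (haN : Bs.length ≤ kN)
    (hpq : p ≤ q)
    (ih : ∀ (M' N' : Lam) (B' : ℕ) (e' f' : ℕ → ℕ),
      siz M' + siz N' < siz (lamN p (apps (var h) As)) + siz (lamN q (apps (var g) Bs)) →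
      siz M' + siz N' ≤ B' → IsBetaEtaNormal M' → IsBetaEtaNormal N' → M' ≠ N' →
      (∀ i, B' < e' i) → (∀ i, B' < f' i) → Function.Injective e' → StrictMono f' →
      (∀ i j, e' i ≠ f' j) →
      Sep (inst (fun i => perm (e' i)) M') (inst (fun i => perm (e' i)) N'))
    (hk : kM = kN) :
    Sep (inst (fun i => perm (e i)) (lamN p (apps (var h) As)))
        (inst (fun i => perm (e i)) (lamN q (apps (var g) Bs))) := by
  classical
  have ha : As.length = As.length := rfl
  set a := As.length with ha'
  set b := Bs.length with hb'
  have hpb : p + b = q + a := by omega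
  set c := q - p with hc
  have hab : a ≤ b := by omega
  have hcb : b - a = c := by omega
  have hpt : p ≤ t := by omega
  have hqt : q ≤ t := by omega
  set eM : ℕ → ℕ := fun i => if i < p then f (p-1-i) else e (i-p) with heM
  set eN : ℕ → ℕ := fun i => if i < q then f (q-1-i) else e (i-q) with heN
  set f'' : ℕ → ℕ := fun i => f (t+1+i) with hf''
  set spec : ℕ → Lam := fun i => perm (f i) with hspec
  have hspecl : ∀ i, Closed (spec i) := fun i => closed_perm _
  have henvM : pushList (mkl 0 p spec) (fun i => perm (e i)) = fun i => perm (eM i) := by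
    funext i
    rw [pushList_mkl]
    simp only [heM, hspec]
    split <;> rfl
  have henvN : pushList (mkl 0 q spec) (fun i => perm (e i)) = fun i => perm (eN i) := by
    funext i
    rw [pushList_mkl]
    simp only [heN, hspec]
    split <;> rfl
  have heNc : ∀ i, eN (i + c) = eM i := by
    intro i
    simp only [heM, heN]
    by_cases hip : i < p
    · rw [if_pos (show i + c < q by omega), if_pos hip]
      congr 1
      omega
    · rw [if_neg (show ¬ (i + c < q) by omega), if_neg hip]
      congr 1
      omega
  have hBeN : ∀ i, B < eN i := by
    intro i
    simp only [heN]
    split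
    · exact hBf _
    · exact hBe _
  have heNi : Function.Injective eN := by
    intro i j hij
    simp only [heN] at hij
    split at hij <;> split at hij
    · have := hfm.injective hij; omega
    · exact absurd hij.symm (hef _ _)
    · exact absurd hij (hef _ _)
    · have := hei hij; omega
  have hBf'' : ∀ i, B < f'' i := fun i => hBf _
  have hf''m : StrictMono f'' := fun i j hij => hfm (by omega)
  have hefN : ∀ i j, eN i ≠ f'' j := by
    intro i j
    simp only [heN, hf'']
    split
    · intro hEq
      have := hfm.injective hEq
      omega
    · exact hef _ _
  have hheadM : (if h < p then spec (p - 1 - h) else perm (e (h - p))) = perm kM := by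
    split
    · rename_i hh
      simp only [hspec]
      rw [hkM, if_pos hh]
    · rename_i hh
      rw [hkM, if_neg hh]
  have hheadN : (if g < q then spec (q - 1 - g) else perm (e (g - q))) = perm kM := by
    split
    · rename_i hh
      simp only [hspec]
      rw [hk, hkN, if_pos hh]
    · rename_i hh
      rw [hk, hkN, if_neg hh]
  have hkMb : b ≤ kM := by omega
  have hsizM := siz_pos (lamN p (apps (var h) As))
  by_cases hex1 : ∃ j, ∃ hj : j < a, shiftN c (As[j]'(by omega)) ≠ Bs[j]'(by omega)
  · obtain ⟨j, hj, hne1⟩ := hex1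
    have hmemA : As[j]'(by omega) ∈ As := List.getElem_mem _
    have hmemB : Bs[j]'(by omega) ∈ Bs := List.getElem_mem _
    have hlt : siz (shiftN c (As[j]'(by omega))) + siz (Bs[j]'(by omega))
        < siz (lamN p (apps (var h) As)) + siz (lamN q (apps (var g) Bs)) := by
      rw [siz_shiftN]
      have s1 := siz_arg_lt (p := p) (h := h) hmemA
      have s2 := siz_arg_lt (p := q) (h := g) hmemB
      omega
    obtain ⟨L', hL'cl, hL'T, hL'F⟩ := ih (shiftN c (As[j]'(by omega))) (Bs[j]'(by omega))
      B eN f'' hlt (by omega) (nrm_shiftN (hAs _ hmemA) c) (hBs _ hmemB) hne1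
      hBeN hBf'' heNi hf''m hefN
    have hshift : inst (fun i => perm (eN i)) (shiftN c (As[j]'(by omega)))
        = inst (fun i => perm (eM i)) (As[j]'(by omega)) := by
      rw [inst_shiftN (closedEnv_instEnv eN) c]
      congr 1
      funext i
      rw [heNc i]
    refine ⟨mkl 0 t spec ++ (sel kM j) :: L', ?_, ?_, ?_⟩
    · intro X hX
      rcases List.mem_append.1 hX with hX | hX
      · exact mkl_closed hspecl X hX
      · rcases List.mem_cons.1 hX with rfl | hX
        · exact closed_sel (by omega)
        · exact hL'cl X hX
    · refine (side_sel e spec hspecl p h As kM t j L' hL'cl hheadM (by omega) hpt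
        (by omega)).trans' ?_
      have hVj : ((As.map (inst (pushList (mkl 0 p spec) (fun i => perm (e i)))))
            ++ mkl p (t-p) spec)[j]'(by
              simp only [List.length_append, List.length_map, mkl_length]; omega)
          = inst (fun i => perm (eM i)) (As[j]'(by omega)) := by
        rw [List.getElem_append_left (by simp only [List.length_map]; omega)]
        rw [List.getElem_map, henvM]
      rw [hVj, ← hshift]
      exact hL'T
    · refine (side_sel e spec hspecl q g Bs kM t j L' hL'cl hheadN (by omega) hqt
        (by omega)).trans' ?_
      have hVj : ((Bs.map (inst (pushList (mkl 0 q spec) (fun i => perm (e i)))))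
            ++ mkl q (t-q) spec)[j]'(by
              simp only [List.length_append, List.length_map, mkl_length]; omega)
          = inst (fun i => perm (eN i)) (Bs[j]'(by omega)) := by
        rw [List.getElem_append_left (by simp only [List.length_map]; omega)]
        rw [List.getElem_map, henvN]
      rw [hVj]
      exact hL'F
  · by_cases hex2 : ∃ j, a ≤ j ∧ ∃ hj : j < b, Bs[j]'(by omega) ≠ var (b - 1 - j)
    · obtain ⟨j, hja, hjb, hne2⟩ := hex2
      have hmemB : Bs[j]'(by omega) ∈ Bs := List.getElem_mem _
      have hlt : siz (var (b - 1 - j)) + siz (Bs[j]'(by omega))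
          < siz (lamN p (apps (var h) As)) + siz (lamN q (apps (var g) Bs)) := by
        have s2 := siz_arg_lt (p := q) (h := g) hmemB
        simp only [siz]
        omega
      obtain ⟨L', hL'cl, hL'T, hL'F⟩ := ih (var (b - 1 - j)) (Bs[j]'(by omega))
        B eN f'' hlt (by omega) (nrm_var _) (hBs _ hmemB) (Ne.symm hne2)
        hBeN hBf'' heNi hf''m hefN
      have hvar : inst (fun i => perm (eN i)) (var (b - 1 - j)) = perm (f (p + (j - a))) := by
        simp only [inst_var]
        congr 1
        simp only [heN]
        rw [if_pos (by omega)]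
        congr 1
        omega
      refine ⟨mkl 0 t spec ++ (sel kM j) :: L', ?_, ?_, ?_⟩
      · intro X hX
        rcases List.mem_append.1 hX with hX | hX
        · exact mkl_closed hspecl X hX
        · rcases List.mem_cons.1 hX with rfl | hX
          · exact closed_sel (by omega)
          · exact hL'cl X hX
      · refine (side_sel e spec hspecl p h As kM t j L' hL'cl hheadM (by omega) hpt
          (by omega)).trans' ?_
        have hVj : ((As.map (inst (pushList (mkl 0 p spec) (fun i => perm (e i)))))
              ++ mkl p (t-p) spec)[j]'(by
                simp only [List.length_append, List.length_map, mkl_length]; omega)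
            = perm (f (p + (j - a))) := by
          rw [List.getElem_append_right (by simp only [List.length_map]; omega)]
          simp only [List.length_map]
          rw [mkl_getElem _ _ _ (by omega)]
        rw [hVj, ← hvar]
        exact hL'T
      · refine (side_sel e spec hspecl q g Bs kM t j L' hL'cl hheadN (by omega) hqt
          (by omega)).trans' ?_
        have hVj : ((Bs.map (inst (pushList (mkl 0 q spec) (fun i => perm (e i)))))
              ++ mkl q (t-q) spec)[j]'(by
                simp only [List.length_append, List.length_map, mkl_length]; omega)
            = inst (fun i => perm (eN i)) (Bs[j]'(by omega)) := by
          rw [List.getElem_append_left (by simp only [List.length_map]; omega)]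
          rw [List.getElem_map, henvN]
        rw [hVj]
        exact hL'F
    · -- no differing position: contradiction with hne / η-normality
      exfalso
      push_neg at hex1 hex2
      have hall1 : ∀ j (hj : j < a), shiftN c (As[j]'(by omega)) = Bs[j]'(by omega) :=
        fun j hj => hex1 j hj
      have hall2 : ∀ j, a ≤ j → ∀ (hj : j < b), Bs[j]'(by omega) = var (b - 1 - j) :=
        fun j hja hjb => hex2 j hja hjb
      have hg : g = h + c := by
        rw [hkM, hkN] at hk
        by_cases hh : h < p <;> by_cases hgq : g < q
        · rw [if_pos hh, if_pos hgq] at hk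
          have := hfm.injective hk
          omega
        · rw [if_pos hh, if_neg hgq] at hk
          exact absurd hk.symm (hef _ _)
        · rw [if_neg hh, if_pos hgq] at hk
          exact absurd hk (hef _ _)
        · rw [if_neg hh, if_neg hgq] at hk
          have := hei hk
          omega
      rcases Nat.eq_zero_or_pos c with hc0 | hc1
      · -- c = 0 : M = N
        have hpq' : p = q := by omega
        have hab' : a = b := by omega
        have hAsBs : As = Bs := by
          apply List.ext_getElem (by omega)
          intro j h1 h2
          have := hall1 j (by omega)
          rw [hc0] at this
          simpa using this
        have hgh : g = h := by omega
        apply hne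
        rw [hpq', hAsBs, hgh]
      · -- c ≥ 1 : η-redex in N
        have hb1 : 1 ≤ b := by omega
        have hq1 : 1 ≤ q := by omega
        have hN1 : IsBetaEtaNormal (lam (apps (var g) Bs)) := by
          have e1 : lamN q (apps (var g) Bs) = lamN (q-1) (lam (apps (var g) Bs)) := by
            conv_lhs => rw [show q = (q-1)+1 by omega]
            rw [lamN_succ']
          rw [e1] at hNn
          exact nrm_lamN_elim hNn
        have hBs_ne : Bs ≠ [] := by
          intro h0
          rw [h0] at hb'
          simp at hb'
          omega
        have hlast : Bs.getLast hBs_ne = var 0 := by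
          rw [List.getLast_eq_getElem]
          rw [getElem_idx_congr _ (show Bs.length - 1 = b - 1 by omega)]
          rw [hall2 (b-1) (by omega) (by omega)]
          congr 1
          omega
        have hdecomp : apps (var g) Bs = app (apps (var g) Bs.dropLast) (var 0) := by
          conv_lhs => rw [← List.dropLast_append_getLast hBs_ne]
          rw [apps_append, hlast]
          rfl
        rw [hdecomp] at hN1
        have hfree : HasFree (apps (var g) Bs.dropLast) 0 := nrm_lam_eta hN1
        rw [hasFree_apps] at hfree
        rcases hfree with h0 | ⟨A, hA, h0⟩
        · have : g = 0 := h0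
          omega
        · obtain ⟨j, hj, rfl⟩ := List.mem_iff_getElem.1 hA
          have hjlen : j < b - 1 := by
            have := hj
            rw [List.length_dropLast] at this
            omega
          have hAe : Bs.dropLast[j]'hj = Bs[j]'(by omega) := List.getElem_dropLast ..
          by_cases hja : j < a
          · have hh1 := hall1 j hja
            rw [hAe, ← hh1] at h0
            have := hasFree_shiftN h0
            omega
          · have hh2 := hall2 j (by omega) (by omega)
            rw [hAe, hh2] at h0
            have : b - 1 - j = 0 := h0
            omega

end Cases

lemma len_le_map_sum (As : List Lam) : As.length ≤ (As.map (fun A => siz A + 1)).sum := by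
  induction As with
  | nil => simp
  | cons A As ih => simp; omega

/-- The main separation theorem (Böhm). -/
theorem main_sep (s : ℕ) : ∀ (M N : Lam) (B : ℕ) (e f : ℕ → ℕ),
    siz M + siz N ≤ s → siz M + siz N ≤ B →
    IsBetaEtaNormal M → IsBetaEtaNormal N → M ≠ N →
    (∀ i, B < e i) → (∀ i, B < f i) →
    Function.Injective e → StrictMono f → (∀ i j, e i ≠ f j) →
    Sep (inst (fun i => perm (e i)) M) (inst (fun i => perm (e i)) N) := by
  induction s using Nat.strong_induction_on with
  | _ s ihs =>
  intro M N B e f hs hB hMn hNn hne hBe hBf hei hfm hef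
  have ih : ∀ (M' N' : Lam) (B' : ℕ) (e' f' : ℕ → ℕ),
      siz M' + siz N' < siz M + siz N →
      siz M' + siz N' ≤ B' → IsBetaEtaNormal M' → IsBetaEtaNormal N' → M' ≠ N' →
      (∀ i, B' < e' i) → (∀ i, B' < f' i) → Function.Injective e' → StrictMono f' →
      (∀ i j, e' i ≠ f' j) →
      Sep (inst (fun i => perm (e' i)) M') (inst (fun i => perm (e' i)) N') := by
    intro M' N' B' e' f' hlt h2 h3 h4 h5 h6 h7 h8 h9 h10
    exact ihs (siz M' + siz N') (by omega) M' N' B' e' f' (le_refl _) h2 h3 h4 h5 h6 h7 h8 h9 h10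
  clear ihs
  obtain ⟨p, h, As, rfl, hAs⟩ := nf_view hMn
  obtain ⟨q, g, Bs, rfl, hBs⟩ := nf_view hNn
  -- numeric bounds
  have hsizM : p + As.length + 1 ≤ siz (lamN p (apps (var h) As)) := by
    rw [siz_lamN, siz_apps]
    have := len_le_map_sum As
    simp [siz]
    omega
  have hsizN : q + Bs.length + 1 ≤ siz (lamN q (apps (var g) Bs)) := by
    rw [siz_lamN, siz_apps]
    have := len_le_map_sum Bs
    simp [siz]
    omega
  set kM := if h < p then f (p - 1 - h) else e (h - p) with hkM
  set kN := if g < q then f (q - 1 - g) else e (g - q) with hkN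
  have hBkM : B < kM := by rw [hkM]; split <;> [exact hBf _; exact hBe _]
  have hBkN : B < kN := by rw [hkN]; split <;> [exact hBf _; exact hBe _]
  set tM := p + (kM - As.length) with htM
  set tN := q + (kN - Bs.length) with htN
  have haM : As.length ≤ kM := by omega
  have haN : Bs.length ≤ kN := by omega
  have hqtM : q ≤ tM := by omega
  have hptN : p ≤ tN := by omega
  rcases Nat.lt_trichotomy tM tN with hord | hord | hord
  · exact caseA B e f hBf p h As q g Bs kM kN tM tN hkM hkN htM htN haM haN hqtM hptN
      (by omega)
  · -- same position
    rcases Nat.lt_trichotomy kM kN with hk | hk | hk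
    · exact caseB B e f hBf p h As q g Bs kM kN tM hkM hkN htM (hord ▸ htN) haM haN
        (by omega) (by omega) hk
    · -- same sizes: case C with possible swap
      rcases le_or_gt p q with hpq | hpq
      · exact caseC B e f hBe hBf hei hfm hef p h As q g Bs hNn hAs hBs
          hB hne kM kN tM hkM hkN htM (hord ▸ htN) haM haN hpq ih hk
      · have hswap := caseC B e f hBe hBf hei hfm hef q g Bs p h As hMn hBs hAs
          (by omega) (Ne.symm hne) kN kM tN hkN hkM htN (hord ▸ htM) haN haM (by omega)
          (by intro M' N' B' e' f' hlt; exact ih M' N' B' e' f' (by omega)) hk.symm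
        exact hswap.swap
    · have hswap := caseB B e f hBf q g Bs p h As kN kM tN hkN hkM htN (hord ▸ htM)
        haN haM (by omega) (by omega) hk
      exact hswap.swap
  · have hswap := caseA B e f hBf q g Bs p h As kN kM tN tM hkN hkM htN htM haN haM
      (by omega) (by omega) (by omega)
    exact hswap.swap

theorem separation {M N : Lam} (hM : IsBetaEtaNormal M) (hN : IsBetaEtaNormal N)
    (hcM : Closed M) (hcN : Closed N) (hne : M ≠ N) : Sep M N := by
  set B := siz M + siz N with hB
  have he : ClosedEnv (fun i => perm ((fun i => B+1+2*i) i)) := fun i => closed_perm _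
  have h := main_sep B M N B (fun i => B+1+2*i) (fun i => B+2+2*i)
    (le_refl _) (le_refl _) hM hN hne (fun i => by omega) (fun i => by omega)
    (fun i j hij => by simp at hij; omega)
    (fun i j hij => by simp; omega)
    (fun i j => by simp; omega)
  rwa [inst_closed he hcM, inst_closed he hcN] at h

end Lam

/-- A numeral system `d` possesses a closed λ-term for Zero Test iff the function
`φ` with `φ 0 = 0` and `φ n = 1` for `n ≥ 1` is λ-definable with respect to `d`. -/
theorem statement13 (d : ℕ → Lam)
    (hc : ∀ n, Lam.Closed (d n)) (hn : ∀ n, Lam.IsBetaEtaNormal (d n))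
    (hinj : Function.Injective d) :
    (∃ Z, Lam.Closed Z ∧ Lam.BetaEq (Lam.app Z (d 0)) Lam.T ∧
        ∀ n, Lam.BetaEq (Lam.app Z (d (n + 1))) Lam.F) ↔
    (∃ Fφ, Lam.Closed Fφ ∧
        ∀ n, Lam.BetaEq (Lam.app Fφ (d n)) (d (if n = 0 then 0 else 1))) := by
  open Lam in
  constructor
  · rintro ⟨Z, hZc, hZ0, hZs⟩
    refine ⟨lam (app (app (app Z (var 0)) (d 0)) (d 1)), ?_, ?_⟩
    · intro n hfree
      simp only [hasFree_lam, hasFree_app, hasFree_var] at hfree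
      rcases hfree with ((h | h) | h) | h
      · exact hZc _ h
      · omega
      · exact hc 0 _ h
      · exact hc 1 _ h
    · intro n
      have hstep : BetaEq (app (lam (app (app (app Z (var 0)) (d 0)) (d 1))) (d n))
          (app (app (app Z (d n)) (d 0)) (d 1)) := by
        have h := Relation.EqvGen.rel _ _
          (Step.beta (app (app (app Z (var 0)) (d 0)) (d 1)) (d n))
        have e : subst (app (app (app Z (var 0)) (d 0)) (d 1)) 0 (d n)
            = app (app (app Z (d n)) (d 0)) (d 1) := by
          simp only [subst, reduceIte]
          rw [subst_closed hZc, subst_closed (hc 0), subst_closed (hc 1)]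
        rwa [e] at h
      refine hstep.trans' ?_
      cases n with
      | zero =>
        simp only [if_pos rfl]
        refine (BetaEq.appL _ (BetaEq.appL _ hZ0)).trans' ?_
        exact betaEq_T_app2 (hc 0) (hc 1)
      | succ m =>
        simp only [Nat.succ_ne_zero, if_neg (Nat.succ_ne_zero m)]
        refine (BetaEq.appL _ (BetaEq.appL _ (hZs m))).trans' ?_
        exact betaEq_F_app2 (hc 0) (d 1)
  · rintro ⟨Fφ, hFc, hF⟩
    have hsep : Lam.Sep (d 0) (d 1) :=
      separation (hn 0) (hn 1) (hc 0) (hc 1) (fun h => by exact absurd (hinj h) (by omega))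
    obtain ⟨L, hLcl, hLT, hLF⟩ := hsep
    refine ⟨lam (apps (app Fφ (var 0)) L), ?_, ?_, ?_⟩
    · intro n hfree
      simp only [hasFree_lam] at hfree
      rw [hasFree_apps] at hfree
      rcases hfree with (h | h) | ⟨A, hA, h⟩
      · exact hFc _ h
      · simp only [hasFree_var] at h; omega
      · exact hLcl A hA _ h
    · have hstep : BetaEq (app (lam (apps (app Fφ (var 0)) L)) (d 0))
          (apps (app Fφ (d 0)) L) := by
        have h := Relation.EqvGen.rel _ _ (Step.beta (apps (app Fφ (var 0)) L) (d 0))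
        have e : subst (apps (app Fφ (var 0)) L) 0 (d 0) = apps (app Fφ (d 0)) L := by
          rw [subst_apps]
          congr 1
          · simp only [subst, reduceIte]
            rw [subst_closed hFc]
          · rw [List.map_congr_left (fun A hA => subst_closed (hLcl A hA) 0 (d 0))]
            exact List.map_id L
        rwa [e] at h
      refine hstep.trans' ?_
      have h0 := hF 0
      simp only [if_pos rfl] at h0
      exact (BetaEq.apps_congL L h0).trans' hLT
    · intro n
      have hstep : BetaEq (app (lam (apps (app Fφ (var 0)) L)) (d (n+1)))
          (apps (app Fφ (d (n+1))) L) := by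
        have h := Relation.EqvGen.rel _ _ (Step.beta (apps (app Fφ (var 0)) L) (d (n+1)))
        have e : subst (apps (app Fφ (var 0)) L) 0 (d (n+1)) = apps (app Fφ (d (n+1))) L := by
          rw [subst_apps]
          congr 1
          · simp only [subst, reduceIte]
            rw [subst_closed hFc]
          · rw [List.map_congr_left (fun A hA => subst_closed (hLcl A hA) 0 (d (n+1)))]
            exact List.map_id L
        rwa [e] at h
      refine hstep.trans' ?_
      have h1 := hF (n+1)
      simp only [Nat.succ_ne_zero, if_neg (Nat.succ_ne_zero n)] at h1
      exact (BetaEq.apps_congL L h1).trans' hLF
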